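/- (Kaimanovich–Vershik–Madiman inequality) If X, Y, Z are jointly independent ℚ-valued discrete random variables, then H[X + Y + Z] ≤ H[X + Y] + H[X + Z] - H[X]. -/

import Mathlib

open scoped Classical
open Finset

/-- Probability of an event under a weight function on a finite sample space. -/
noncomputable def prb {Ω : Type*} [Fintype Ω] (μ : Ω → ℝ) (E : Set Ω) : ℝ :=
  ∑ ω ∈ Finset.univ.filter (fun ω => ω ∈ E), μ ω

/-- `μ` is a probability mass function on the finite space `Ω`. -/
def IsProb {Ω : Type*} [Fintype Ω] (μ : Ω → ℝ) : Prop :=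
  (∀ ω, 0 ≤ μ ω) ∧ ∑ ω, μ ω = 1

/-- Shannon entropy of a random variable `X` on a finite probability space. -/
noncomputable def ent {Ω S : Type*} [Fintype Ω] (μ : Ω → ℝ) (X : Ω → S) : ℝ :=
  ∑ s ∈ Finset.univ.image X, Real.negMulLog (prb μ {ω | X ω = s})

/-- Independence of two random variables. -/
def IndepRV {Ω S T : Type*} [Fintype Ω] (μ : Ω → ℝ) (X : Ω → S) (Y : Ω → T) : Prop :=
  ∀ x y, prb μ {ω | X ω = x ∧ Y ω = y} = prb μ {ω | X ω = x} * prb μ {ω | Y ω = y}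

/-- Conditional Shannon entropy `H[X|Z] = H[X,Z] - H[Z]`. -/
noncomputable def condEnt {Ω S T : Type*} [Fintype Ω] (μ : Ω → ℝ) (X : Ω → S) (Z : Ω → T) : ℝ :=
  ent μ (fun ω => (X ω, Z ω)) - ent μ Z

/-- Entropic Ruzsa distance `d[X;Y] = H[X'-Y'] - H[X]/2 - H[Y]/2`,
realized on the product space so that the copies are independent. -/
noncomputable def rdist {Ω₁ Ω₂ : Type*} [Fintype Ω₁] [Fintype Ω₂]
    (μ₁ : Ω₁ → ℝ) (μ₂ : Ω₂ → ℝ) (X : Ω₁ → ℚ) (Y : Ω₂ → ℚ) : ℝ :=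
  ent (fun p : Ω₁ × Ω₂ => μ₁ p.1 * μ₂ p.2) (fun p => X p.1 - Y p.2)
    - ent μ₁ X / 2 - ent μ₂ Y / 2

/-- The quantity `g(a) = H[X - a X'] - H[X]`, where `X'` is an independent copy of `X`. -/
noncomputable def gfun {Ω : Type*} [Fintype Ω] (μ : Ω → ℝ) (X : Ω → ℚ) (a : ℚ) : ℝ :=
  ent (fun p : Ω × Ω => μ p.1 * μ p.2) (fun p => X p.1 - a * X p.2) - ent μ X

/-- Projection `π_r(x,y) = x + r y` for a finite slope `some r`, and `π_∞(x,y) = y`. -/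
noncomputable def pSlope : Option ℚ → ℚ × ℚ → ℚ
  | none, p => p.2
  | some r, p => p.1 + r * p.2

/-- The measure `μ` conditioned on the event `Z = z`. -/
noncomputable def condMeasure {Ω T : Type*} [Fintype Ω] (μ : Ω → ℝ) (Z : Ω → T) (z : T) :
    Ω → ℝ :=
  fun ω => if Z ω = z then μ ω / prb μ {ω' | Z ω' = z} else 0

/-- `E_{Z=z} d[X|Z=z ; X|Z=z]`, the averaged conditional entropic Ruzsa self-distance. -/
noncomputable def condSelfDoubling {Ω T : Type*} [Fintype Ω] (μ : Ω → ℝ)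
    (X : Ω → ℚ) (Z : Ω → T) : ℝ :=
  ∑ z ∈ Finset.univ.image Z, prb μ {ω | Z ω = z} *
    rdist (condMeasure μ Z z) (condMeasure μ Z z) X X

open scoped Pointwise

section Aux

variable {Ω : Type*} [Fintype Ω] {μ : Ω → ℝ}

lemma prb_nonneg (h : ∀ ω, 0 ≤ μ ω) (E : Set Ω) : 0 ≤ prb μ E :=
  Finset.sum_nonneg fun ω _ => h ω

lemma prb_congr (μ : Ω → ℝ) {E F : Set Ω} (h : ∀ ω, ω ∈ E ↔ ω ∈ F) : prb μ E = prb μ F := by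
  rw [Set.ext h]

lemma prb_sum_fiber {τ : Type*} (μ : Ω → ℝ) (V : Ω → τ) (E : Set Ω)
    (T : Finset τ) (hT : ∀ ω, V ω ∈ T) :
    ∑ v ∈ T, prb μ {ω | V ω = v ∧ ω ∈ E} = prb μ E := by
  unfold prb
  rw [← Finset.sum_fiberwise_of_maps_to (g := V) (fun ω _ => hT ω) μ]
  refine Finset.sum_congr rfl fun v _ => Finset.sum_congr ?_ fun _ _ => rfl
  ext ω
  simp only [Finset.mem_filter, Finset.mem_univ, true_and, Set.mem_setOf_eq]
  tauto

lemma sum_prb_mul {τ : Type*} (μ : Ω → ℝ) (V : Ω → τ) (f : τ → ℝ)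
    (T : Finset τ) (hT : ∀ ω, V ω ∈ T) :
    ∑ v ∈ T, prb μ {ω | V ω = v} * f v = ∑ ω, μ ω * f (V ω) := by
  rw [← Finset.sum_fiberwise_of_maps_to (g := V) (fun ω _ => hT ω) (fun ω => μ ω * f (V ω))]
  refine Finset.sum_congr rfl fun v _ => ?_
  unfold prb
  rw [Finset.sum_mul]
  refine Finset.sum_congr (by ext ω; simp only [Finset.mem_filter, Finset.mem_univ, true_and, Set.mem_setOf_eq]) fun ω hω => ?_
  simp only [Finset.mem_filter] at hω
  rw [hω.2]

lemma sum_prb_eq_one {τ : Type*} (hμ : IsProb μ) (V : Ω → τ)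
    (T : Finset τ) (hT : ∀ ω, V ω ∈ T) :
    ∑ v ∈ T, prb μ {ω | V ω = v} = 1 := by
  have := sum_prb_mul μ V (fun _ => 1) T hT
  simpa [hμ.2] using this

lemma prb_eq_zero {τ : Type*} (μ : Ω → ℝ) (V : Ω → τ) {v : τ}
    (hv : ∀ ω, V ω ≠ v) : prb μ {ω | V ω = v} = 0 := by
  unfold prb
  refine Finset.sum_eq_zero fun ω hω => ?_
  simp only [Finset.mem_filter, Set.mem_setOf_eq] at hω
  exact absurd hω.2 (hv ω)

lemma le_prb (h : ∀ ω, 0 ≤ μ ω) {τ : Type*} (V : Ω → τ) (ω : Ω) :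
    μ ω ≤ prb μ {ω' | V ω' = V ω} := by
  refine Finset.single_le_sum (fun i _ => h i) ?_
  exact Finset.mem_filter.mpr ⟨Finset.mem_univ ω, rfl⟩

lemma ent_eq_sum {S : Type*} (μ : Ω → ℝ) (X : Ω → S) :
    ent μ X = -∑ ω, μ ω * Real.log (prb μ {ω' | X ω' = X ω}) := by
  rw [← sum_prb_mul μ X (fun s => Real.log (prb μ {ω' | X ω' = s})) (Finset.univ.image X)
    (fun ω => Finset.mem_image_of_mem X (Finset.mem_univ ω)), ent, ← Finset.sum_neg_distrib]
  exact Finset.sum_congr rfl fun s _ => by rw [Real.negMulLog]; ring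


end Aux


lemma conv_bound (SX SY SZ T1 : Finset ℚ) (Q R A B C : ℚ → ℝ)
    (hQ : ∀ y, 0 ≤ Q y) (hR : ∀ z, 0 ≤ R z) (hA : ∀ s, 0 ≤ A s) (hB : ∀ t, 0 ≤ B t)
    (hT1 : ∀ x ∈ SX, ∀ y ∈ SY, x + y ∈ T1)
    (hQ0 : ∀ y, y ∉ SY → Q y = 0)
    (hconv : ∀ u, ∑ y ∈ SY, Q y * B (u - y) = C u)
    (hRsum : ∑ z ∈ SZ, R z = 1) (hAsum : ∑ s ∈ T1, A s = 1) :
    ∑ x ∈ SX, ∑ y ∈ SY, ∑ z ∈ SZ, Q y * R z * (A (x+y) * B (x+z) / C (x+y+z)) ≤ 1 := by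
  have hC0 : ∀ u, 0 ≤ C u := fun u => by
    rw [← hconv u]
    exact Finset.sum_nonneg fun y _ => mul_nonneg (hQ y) (hB _)
  have key : ∀ x ∈ SX, ∑ y ∈ SY, ∑ z ∈ SZ, Q y * R z * (A (x+y) * B (x+z) / C (x+y+z))
      = ∑ z ∈ SZ, ∑ s ∈ T1, Q (s - x) * R z * (A s * B (x+z) / C (s+z)) := by
    intro x hx
    rw [Finset.sum_comm]
    refine Finset.sum_congr rfl fun z _ => ?_
    calc ∑ y ∈ SY, Q y * R z * (A (x+y) * B (x+z) / C (x+y+z))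
        = ∑ y ∈ SY, (fun s => Q (s - x) * R z * (A s * B (x+z) / C (s+z))) (x + y) := by
          refine Finset.sum_congr rfl fun y _ => ?_
          simp only [add_sub_cancel_left]
      _ = ∑ s ∈ SY.image (fun y => x + y), Q (s - x) * R z * (A s * B (x+z) / C (s+z)) :=
          (Finset.sum_image (f := fun s => Q (s - x) * R z * (A s * B (x+z) / C (s+z)))
            (g := fun y => x + y) (fun a _ b _ h => by exact add_left_cancel h)).symm
      _ = ∑ s ∈ T1, Q (s - x) * R z * (A s * B (x+z) / C (s+z)) := by
          refine Finset.sum_subset (Finset.image_subset_iff.mpr fun y hy => hT1 x hx y hy)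
            (fun s hs hs' => ?_)
          rw [hQ0 (s - x) fun hmem => hs' (Finset.mem_image.mpr ⟨s - x, hmem, by ring⟩),
            zero_mul, zero_mul]
  calc ∑ x ∈ SX, ∑ y ∈ SY, ∑ z ∈ SZ, Q y * R z * (A (x+y) * B (x+z) / C (x+y+z))
      = ∑ x ∈ SX, ∑ z ∈ SZ, ∑ s ∈ T1, Q (s - x) * R z * (A s * B (x+z) / C (s+z)) :=
        Finset.sum_congr rfl key
    _ = ∑ z ∈ SZ, ∑ s ∈ T1, ∑ x ∈ SX, Q (s - x) * R z * (A s * B (x+z) / C (s+z)) := by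
        rw [Finset.sum_comm]
        exact Finset.sum_congr rfl fun z _ => Finset.sum_comm
    _ ≤ ∑ z ∈ SZ, ∑ s ∈ T1, R z * A s := by
        refine Finset.sum_le_sum fun z _ => Finset.sum_le_sum fun s _ => ?_
        by_cases hc : C (s + z) = 0
        · simp only [hc, div_zero, mul_zero, Finset.sum_const_zero]
          exact mul_nonneg (hR z) (hA s)
        · have hcpos : 0 < C (s + z) := (hC0 (s+z)).lt_of_ne (Ne.symm hc)
          have hfac : ∑ x ∈ SX, Q (s - x) * R z * (A s * B (x+z) / C (s+z))
              = (∑ x ∈ SX, Q (s - x) * B (x+z)) * (R z * A s / C (s+z)) := by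
            rw [Finset.sum_mul]
            exact Finset.sum_congr rfl fun x _ => by ring
          have hinner : ∑ x ∈ SX, Q (s - x) * B (x+z) ≤ C (s + z) := by
            rw [← hconv (s+z)]
            calc ∑ x ∈ SX, Q (s - x) * B (x+z)
                = ∑ x ∈ SX, (fun y => Q y * B ((s+z) - y)) (s - x) := by
                  refine Finset.sum_congr rfl fun x _ => ?_
                  have : s + z - (s - x) = x + z := by ring
                  simp only [this]
              _ = ∑ y ∈ SX.image (fun x => s - x), Q y * B ((s+z) - y) :=
                  (Finset.sum_image (f := fun y => Q y * B ((s+z) - y))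
                    (g := fun x => s - x) (fun a _ b _ h => by
                      have : s - a = s - b := h
                      linarith)).symm
              _ = ∑ y ∈ (SX.image (fun x => s - x)) ∩ SY, Q y * B ((s+z) - y) := by
                  refine (Finset.sum_subset Finset.inter_subset_left fun y hy hy' => ?_).symm
                  rw [hQ0 y (fun h => hy' (Finset.mem_inter.mpr ⟨hy, h⟩)), zero_mul]
              _ ≤ ∑ y ∈ SY, Q y * B ((s+z) - y) :=
                  Finset.sum_le_sum_of_subset_of_nonneg Finset.inter_subset_right
                    (fun y _ _ => mul_nonneg (hQ y) (hB _))
          calc ∑ x ∈ SX, Q (s - x) * R z * (A s * B (x+z) / C (s+z))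
              = (∑ x ∈ SX, Q (s - x) * B (x+z)) * (R z * A s / C (s+z)) := hfac
            _ ≤ C (s + z) * (R z * A s / C (s+z)) :=
                mul_le_mul_of_nonneg_right hinner
                  (div_nonneg (mul_nonneg (hR z) (hA s)) (hC0 _))
            _ = R z * A s := by field_simp
    _ = 1 := by
        rw [← Finset.sum_mul_sum SZ T1 R A]
        rw [hRsum, hAsum, one_mul]



/-- Kaimanovich–Vershik–Madiman: for jointly independent `X, Y, Z`,
`H[X + Y + Z] ≤ H[X + Y] + H[X + Z] - H[X]`. -/
theorem kvm_inequality {Ω : Type*} [Fintype Ω] (μ : Ω → ℝ) (hμ : IsProb μ)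
    (X Y Z : Ω → ℚ)
    (hindep : ∀ x y z : ℚ,
      prb μ {ω | X ω = x ∧ Y ω = y ∧ Z ω = z} =
        prb μ {ω | X ω = x} * prb μ {ω | Y ω = y} * prb μ {ω | Z ω = z}) :
    ent μ (fun ω => X ω + Y ω + Z ω) ≤
      ent μ (fun ω => X ω + Y ω) + ent μ (fun ω => X ω + Z ω) - ent μ X := by
  classical
  obtain ⟨hμ0, hμ1⟩ := hμ
  have hTX : ∀ ω, X ω ∈ Finset.univ.image X := fun ω => Finset.mem_image_of_mem X (Finset.mem_univ ω)
  have hTY : ∀ ω, Y ω ∈ Finset.univ.image Y := fun ω => Finset.mem_image_of_mem Y (Finset.mem_univ ω)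
  have hTZ : ∀ ω, Z ω ∈ Finset.univ.image Z := fun ω => Finset.mem_image_of_mem Z (Finset.mem_univ ω)
  have hQsum : ∑ y ∈ Finset.univ.image Y, prb μ {ω | Y ω = y} = 1 :=
    sum_prb_eq_one ⟨hμ0, hμ1⟩ Y _ hTY
  have hRsum : ∑ z ∈ Finset.univ.image Z, prb μ {ω | Z ω = z} = 1 :=
    sum_prb_eq_one ⟨hμ0, hμ1⟩ Z _ hTZ
  -- derived pairwise independence of X and Z
  have hPR : ∀ x z : ℚ, prb μ {ω | X ω = x ∧ Z ω = z} =
      prb μ {ω | X ω = x} * prb μ {ω | Z ω = z} := by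
    intro x z
    rw [← prb_sum_fiber μ Y {ω | X ω = x ∧ Z ω = z} (Finset.univ.image Y) hTY]
    calc ∑ y ∈ Finset.univ.image Y, prb μ {ω | Y ω = y ∧ ω ∈ {ω | X ω = x ∧ Z ω = z}}
        = ∑ y ∈ Finset.univ.image Y,
            prb μ {ω | X ω = x} * prb μ {ω | Y ω = y} * prb μ {ω | Z ω = z} := by
          refine Finset.sum_congr rfl fun y _ => ?_
          rw [prb_congr μ (F := {ω | X ω = x ∧ Y ω = y ∧ Z ω = z})
            (fun ω => by simp only [Set.mem_setOf_eq]; tauto)]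
          exact hindep x y z
      _ = prb μ {ω | X ω = x} * prb μ {ω | Z ω = z} := by
          rw [Finset.sum_congr rfl fun y (_ : y ∈ Finset.univ.image Y) =>
            (by ring : prb μ {ω | X ω = x} * prb μ {ω | Y ω = y} * prb μ {ω | Z ω = z}
              = prb μ {ω | X ω = x} * prb μ {ω | Z ω = z} * prb μ {ω | Y ω = y}),
            ← Finset.mul_sum, hQsum, mul_one]
  -- convolution formula for B
  have hB : ∀ t : ℚ, prb μ {ω | X ω + Z ω = t} =
      ∑ x ∈ Finset.univ.image X, prb μ {ω | X ω = x} * prb μ {ω | Z ω = t - x} := by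
    intro t
    rw [← prb_sum_fiber μ X {ω | X ω + Z ω = t} (Finset.univ.image X) hTX]
    refine Finset.sum_congr rfl fun x _ => ?_
    rw [prb_congr μ (F := {ω | X ω = x ∧ Z ω = t - x})
      (fun ω => by
        simp only [Set.mem_setOf_eq]
        constructor
        · rintro ⟨h1, h2⟩; exact ⟨h1, by linarith⟩
        · rintro ⟨h1, h2⟩; exact ⟨h1, by linarith⟩)]
    exact hPR x (t - x)
  -- independence of Y and X + Z
  have hQB : ∀ y t : ℚ, prb μ {ω | Y ω = y ∧ X ω + Z ω = t} =
      prb μ {ω | Y ω = y} * prb μ {ω | X ω + Z ω = t} := by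
    intro y t
    rw [← prb_sum_fiber μ X {ω | Y ω = y ∧ X ω + Z ω = t} (Finset.univ.image X) hTX]
    calc ∑ x ∈ Finset.univ.image X, prb μ {ω | X ω = x ∧ ω ∈ {ω | Y ω = y ∧ X ω + Z ω = t}}
        = ∑ x ∈ Finset.univ.image X,
            prb μ {ω | Y ω = y} * (prb μ {ω | X ω = x} * prb μ {ω | Z ω = t - x}) := by
          refine Finset.sum_congr rfl fun x _ => ?_
          rw [prb_congr μ (F := {ω | X ω = x ∧ Y ω = y ∧ Z ω = t - x})
            (fun ω => by
              simp only [Set.mem_setOf_eq]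
              constructor
              · rintro ⟨h1, h2, h3⟩; exact ⟨h1, h2, by linarith⟩
              · rintro ⟨h1, h2, h3⟩; exact ⟨h1, h2, by linarith⟩)]
          rw [hindep x y (t - x)]
          ring
      _ = prb μ {ω | Y ω = y} * prb μ {ω | X ω + Z ω = t} := by
          rw [← Finset.mul_sum, hB t]
  -- the key convolution identity for C
  have hconv : ∀ u : ℚ, ∑ y ∈ Finset.univ.image Y,
      prb μ {ω | Y ω = y} * prb μ {ω | X ω + Z ω = u - y} =
      prb μ {ω | X ω + Y ω + Z ω = u} := by
    intro u
    rw [← prb_sum_fiber μ Y {ω | X ω + Y ω + Z ω = u} (Finset.univ.image Y) hTY]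
    refine Finset.sum_congr rfl fun y _ => ?_
    rw [prb_congr μ (E := {ω | Y ω = y ∧ ω ∈ {ω | X ω + Y ω + Z ω = u}})
      (F := {ω | Y ω = y ∧ X ω + Z ω = u - y})
      (fun ω => by
        simp only [Set.mem_setOf_eq]
        constructor
        · rintro ⟨h1, h2⟩; exact ⟨h1, by linarith⟩
        · rintro ⟨h1, h2⟩; exact ⟨h1, by linarith⟩)]
    exact (hQB y (u - y)).symm
  -- joint pmf of the triple
  have hXYZ : ∀ v : ℚ × ℚ × ℚ, prb μ {ω | (X ω, Y ω, Z ω) = v} =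
      prb μ {ω | X ω = v.1} * prb μ {ω | Y ω = v.2.1} * prb μ {ω | Z ω = v.2.2} := by
    rintro ⟨x, y, z⟩
    rw [prb_congr μ (F := {ω | X ω = x ∧ Y ω = y ∧ Z ω = z})
      (fun ω => by simp only [Set.mem_setOf_eq, Prod.mk.injEq])]
    exact hindep x y z
  -- the quantitative bound E' ≤ 1
  have key2 : ∑ ω, μ ω * (prb μ {ω' | X ω' + Y ω' = X ω + Y ω} *
      prb μ {ω' | X ω' + Z ω' = X ω + Z ω} /
      (prb μ {ω' | X ω' = X ω} * prb μ {ω' | X ω' + Y ω' + Z ω' = X ω + Y ω + Z ω})) ≤ 1 := by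
    have hmem : ∀ ω, (X ω, Y ω, Z ω) ∈
        (Finset.univ.image X) ×ˢ (Finset.univ.image Y) ×ˢ (Finset.univ.image Z) := fun ω =>
      Finset.mem_product.mpr ⟨hTX ω, Finset.mem_product.mpr ⟨hTY ω, hTZ ω⟩⟩
    have h := sum_prb_mul μ (fun ω => (X ω, Y ω, Z ω))
      (fun v => prb μ {ω' | X ω' + Y ω' = v.1 + v.2.1} * prb μ {ω' | X ω' + Z ω' = v.1 + v.2.2} /
        (prb μ {ω' | X ω' = v.1} * prb μ {ω' | X ω' + Y ω' + Z ω' = v.1 + v.2.1 + v.2.2}))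
      ((Finset.univ.image X) ×ˢ (Finset.univ.image Y) ×ˢ (Finset.univ.image Z)) hmem
    rw [show (∑ ω, μ ω * (prb μ {ω' | X ω' + Y ω' = X ω + Y ω} *
        prb μ {ω' | X ω' + Z ω' = X ω + Z ω} /
        (prb μ {ω' | X ω' = X ω} * prb μ {ω' | X ω' + Y ω' + Z ω' = X ω + Y ω + Z ω}))) =
      ∑ ω, μ ω * ((fun v : ℚ × ℚ × ℚ =>
        prb μ {ω' | X ω' + Y ω' = v.1 + v.2.1} * prb μ {ω' | X ω' + Z ω' = v.1 + v.2.2} /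
        (prb μ {ω' | X ω' = v.1} * prb μ {ω' | X ω' + Y ω' + Z ω' = v.1 + v.2.1 + v.2.2}))
        ((fun ω => (X ω, Y ω, Z ω)) ω)) from rfl, ← h]
    calc (∑ v ∈ (Finset.univ.image X) ×ˢ (Finset.univ.image Y) ×ˢ (Finset.univ.image Z),
          prb μ {ω | (X ω, Y ω, Z ω) = v} *
          (prb μ {ω' | X ω' + Y ω' = v.1 + v.2.1} * prb μ {ω' | X ω' + Z ω' = v.1 + v.2.2} /
          (prb μ {ω' | X ω' = v.1} * prb μ {ω' | X ω' + Y ω' + Z ω' = v.1 + v.2.1 + v.2.2})))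
        = ∑ x ∈ Finset.univ.image X, ∑ y ∈ Finset.univ.image Y, ∑ z ∈ Finset.univ.image Z,
          (prb μ {ω | X ω = x} * prb μ {ω | Y ω = y} * prb μ {ω | Z ω = z}) *
          (prb μ {ω' | X ω' + Y ω' = x + y} * prb μ {ω' | X ω' + Z ω' = x + z} /
          (prb μ {ω' | X ω' = x} * prb μ {ω' | X ω' + Y ω' + Z ω' = x + y + z})) := by
          rw [Finset.sum_congr rfl fun v _ => by rw [hXYZ v]]
          rw [Finset.sum_product]
          refine Finset.sum_congr rfl fun x _ => ?_
          rw [Finset.sum_product]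
      _ ≤ ∑ x ∈ Finset.univ.image X, ∑ y ∈ Finset.univ.image Y, ∑ z ∈ Finset.univ.image Z,
          prb μ {ω | Y ω = y} * prb μ {ω | Z ω = z} *
          (prb μ {ω' | X ω' + Y ω' = x + y} * prb μ {ω' | X ω' + Z ω' = x + z} /
          prb μ {ω' | X ω' + Y ω' + Z ω' = x + y + z}) := by
          refine Finset.sum_le_sum fun x _ => Finset.sum_le_sum fun y _ =>
            Finset.sum_le_sum fun z _ => ?_
          by_cases hc : prb μ {ω' | X ω' + Y ω' + Z ω' = x + y + z} = 0
          · simp only [hc, mul_zero, div_zero, mul_zero, le_refl]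
          by_cases hp : prb μ {ω | X ω = x} = 0
          · rw [hp, zero_mul, zero_mul, zero_mul]
            exact mul_nonneg (mul_nonneg (prb_nonneg hμ0 _) (prb_nonneg hμ0 _))
              (div_nonneg (mul_nonneg (prb_nonneg hμ0 _) (prb_nonneg hμ0 _)) (prb_nonneg hμ0 _))
          · refine le_of_eq ?_
            field_simp
      _ ≤ 1 := by
          refine conv_bound (Finset.univ.image X) (Finset.univ.image Y) (Finset.univ.image Z)
            ((Finset.univ.image X) + (Finset.univ.image Y))
            (fun y => prb μ {ω | Y ω = y}) (fun z => prb μ {ω | Z ω = z})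
            (fun s => prb μ {ω | X ω + Y ω = s}) (fun t => prb μ {ω | X ω + Z ω = t})
            (fun u => prb μ {ω | X ω + Y ω + Z ω = u})
            (fun y => prb_nonneg hμ0 _) (fun z => prb_nonneg hμ0 _)
            (fun s => prb_nonneg hμ0 _) (fun t => prb_nonneg hμ0 _)
            (fun x hx y hy => Finset.add_mem_add hx hy)
            (fun y hy => prb_eq_zero μ Y (fun ω h => hy (h ▸ hTY ω)))
            hconv hRsum ?_
          exact sum_prb_eq_one ⟨hμ0, hμ1⟩ (fun ω => X ω + Y ω) _
            (fun ω => Finset.add_mem_add (hTX ω) (hTY ω))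
  -- pointwise logarithmic bound and conclusion
  have key : ∑ ω, μ ω * (Real.log (prb μ {ω' | X ω' + Y ω' = X ω + Y ω}) +
      Real.log (prb μ {ω' | X ω' + Z ω' = X ω + Z ω}) -
      Real.log (prb μ {ω' | X ω' = X ω}) -
      Real.log (prb μ {ω' | X ω' + Y ω' + Z ω' = X ω + Y ω + Z ω})) ≤ 0 := by
    have step : ∀ ω : Ω, μ ω * (Real.log (prb μ {ω' | X ω' + Y ω' = X ω + Y ω}) +
        Real.log (prb μ {ω' | X ω' + Z ω' = X ω + Z ω}) -
        Real.log (prb μ {ω' | X ω' = X ω}) -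
        Real.log (prb μ {ω' | X ω' + Y ω' + Z ω' = X ω + Y ω + Z ω})) ≤
        μ ω * (prb μ {ω' | X ω' + Y ω' = X ω + Y ω} *
        prb μ {ω' | X ω' + Z ω' = X ω + Z ω} /
        (prb μ {ω' | X ω' = X ω} * prb μ {ω' | X ω' + Y ω' + Z ω' = X ω + Y ω + Z ω}) - 1) := by
      intro ω
      rcases (hμ0 ω).eq_or_lt with h | h
      · rw [← h, zero_mul, zero_mul]
      · have hP : 0 < prb μ {ω' | X ω' = X ω} := lt_of_lt_of_le h (le_prb hμ0 X ω)
        have hA : 0 < prb μ {ω' | X ω' + Y ω' = X ω + Y ω} :=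
          lt_of_lt_of_le h (le_prb hμ0 (fun ω => X ω + Y ω) ω)
        have hBp : 0 < prb μ {ω' | X ω' + Z ω' = X ω + Z ω} :=
          lt_of_lt_of_le h (le_prb hμ0 (fun ω => X ω + Z ω) ω)
        have hC : 0 < prb μ {ω' | X ω' + Y ω' + Z ω' = X ω + Y ω + Z ω} :=
          lt_of_lt_of_le h (le_prb hμ0 (fun ω => X ω + Y ω + Z ω) ω)
        refine mul_le_mul_of_nonneg_left ?_ h.le
        rw [← Real.log_mul hA.ne' hBp.ne', sub_sub, ← Real.log_mul hP.ne' hC.ne',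
          ← Real.log_div (mul_pos hA hBp).ne' (mul_pos hP hC).ne']
        exact Real.log_le_sub_one_of_pos (div_pos (mul_pos hA hBp) (mul_pos hP hC))
    calc ∑ ω, μ ω * (Real.log (prb μ {ω' | X ω' + Y ω' = X ω + Y ω}) +
        Real.log (prb μ {ω' | X ω' + Z ω' = X ω + Z ω}) -
        Real.log (prb μ {ω' | X ω' = X ω}) -
        Real.log (prb μ {ω' | X ω' + Y ω' + Z ω' = X ω + Y ω + Z ω}))
        ≤ ∑ ω, μ ω * (prb μ {ω' | X ω' + Y ω' = X ω + Y ω} *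
          prb μ {ω' | X ω' + Z ω' = X ω + Z ω} /
          (prb μ {ω' | X ω' = X ω} * prb μ {ω' | X ω' + Y ω' + Z ω' = X ω + Y ω + Z ω}) - 1) :=
          Finset.sum_le_sum fun ω _ => step ω
      _ = (∑ ω, μ ω * (prb μ {ω' | X ω' + Y ω' = X ω + Y ω} *
          prb μ {ω' | X ω' + Z ω' = X ω + Z ω} /
          (prb μ {ω' | X ω' = X ω} * prb μ {ω' | X ω' + Y ω' + Z ω' = X ω + Y ω + Z ω}))) -
          ∑ ω, μ ω := by
          rw [← Finset.sum_sub_distrib]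
          exact Finset.sum_congr rfl fun ω _ => by ring
      _ ≤ 1 - 1 := by rw [hμ1]; exact sub_le_sub_right key2 1
      _ = 0 := by norm_num
  have e1 := ent_eq_sum μ (fun ω => X ω + Y ω + Z ω)
  have e2 := ent_eq_sum μ (fun ω => X ω + Y ω)
  have e3 := ent_eq_sum μ (fun ω => X ω + Z ω)
  have e4 := ent_eq_sum μ X
  rw [e1, e2, e3, e4]
  have split : ∑ ω, μ ω * (Real.log (prb μ {ω' | X ω' + Y ω' = X ω + Y ω}) +
      Real.log (prb μ {ω' | X ω' + Z ω' = X ω + Z ω}) -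
      Real.log (prb μ {ω' | X ω' = X ω}) -
      Real.log (prb μ {ω' | X ω' + Y ω' + Z ω' = X ω + Y ω + Z ω})) =
      (∑ ω, μ ω * Real.log (prb μ {ω' | X ω' + Y ω' = X ω + Y ω})) +
      (∑ ω, μ ω * Real.log (prb μ {ω' | X ω' + Z ω' = X ω + Z ω})) -
      (∑ ω, μ ω * Real.log (prb μ {ω' | X ω' = X ω})) -
      (∑ ω, μ ω * Real.log (prb μ {ω' | X ω' + Y ω' + Z ω' = X ω + Y ω + Z ω})) := by
    simp only [mul_add, mul_sub, Finset.sum_add_distrib, Finset.sum_sub_distrib]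
  rw [split] at key
  linarith [key]
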